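/- Let p ∈ (1,+∞), m ∈ [p,+∞) and q := p/(m-1). Define c_{p,m}^{(1)} := (⌊p/(p-1)⌋+2)·∏_{j=1}^{⌊p/(p-1)⌋+1}(p/(m-1)+j) and ĉ_{p,m} := 2·e^{c_{p,m}^{(1)}}. Then for every s ∈ (0,1) one has (c̄_{k,q,s})^{1/(qs)} ≤ ĉ_{p,m}, where c̄_{k,q,s} := max{2^{qs}, 2^{qs}·Σ_{i=0}^{k} c_{q,s,i}} with c_{q,s,i} := (∏_{j=0}^{i-1}(qs+j))/i!. -/
import Mathlib


open MeasureTheory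
open scoped ENNReal NNReal

noncomputable section

/-- The singular kernel `|u x - u y|^p / |x-y|^{n+sp}` as an extended nonnegative real. -/
def interKernel (n : ℕ) (s p : ℝ) (u : EuclideanSpace ℝ (Fin n) → ℝ)
    (x y : EuclideanSpace ℝ (Fin n)) : ℝ≥0∞ :=
  ENNReal.ofReal (|u x - u y| ^ p / ‖x - y‖ ^ ((n : ℝ) + s * p))

/-- The nonlocal interaction energy `K_s^p(u, Ω)`. -/
def Kenergy (n : ℕ) (s p : ℝ) (u : EuclideanSpace ℝ (Fin n) → ℝ)
    (Ω : Set (EuclideanSpace ℝ (Fin n))) : ℝ≥0∞ :=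
  (1 / 2 : ℝ≥0∞) * ∫⁻ x in Ω, ∫⁻ y in Ω, interKernel n s p u x y
    + ∫⁻ x in Ω, ∫⁻ y in Ωᶜ, interKernel n s p u x y

/-- The total energy `E_s^p(u, Ω) = K_s^p(u,Ω) + ∫_Ω W(u)`. -/
def Eenergy (n : ℕ) (s p : ℝ) (W : ℝ → ℝ) (u : EuclideanSpace ℝ (Fin n) → ℝ)
    (Ω : Set (EuclideanSpace ℝ (Fin n))) : ℝ≥0∞ :=
  Kenergy n s p u Ω + ∫⁻ x in Ω, ENNReal.ofReal (W (u x))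

/-- Membership in the admissible class `X^{s,p}(Ω)`. -/
def memX (n : ℕ) (s p : ℝ) (u : EuclideanSpace ℝ (Fin n) → ℝ)
    (Ω : Set (EuclideanSpace ℝ (Fin n))) : Prop :=
  Measurable u ∧ Kenergy n s p u Ω < ⊤ ∧
    ∀ᵐ x ∂(volume : Measure (EuclideanSpace ℝ (Fin n))), |u x| ≤ 1

/-- `u` minimizes `E_s^p(·, Ω)` among competitors in `X^{s,p}(Ω)` agreeing with `u` outside `Ω`. -/
def minimizesOn (n : ℕ) (s p : ℝ) (W : ℝ → ℝ) (u : EuclideanSpace ℝ (Fin n) → ℝ)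
    (Ω : Set (EuclideanSpace ℝ (Fin n))) : Prop :=
  memX n s p u Ω ∧ ∀ v : EuclideanSpace ℝ (Fin n) → ℝ, memX n s p v Ω →
    (∀ x ∉ Ω, v x = u x) → Eenergy n s p W u Ω ≤ Eenergy n s p W v Ω

/-- `u` is a minimizer of `E_s^p` in `Ω` (bounded case directly, unbounded case on all
bounded open subsets compactly contained in `Ω`). -/
def isMinimizerE (n : ℕ) (s p : ℝ) (W : ℝ → ℝ) (u : EuclideanSpace ℝ (Fin n) → ℝ)
    (Ω : Set (EuclideanSpace ℝ (Fin n))) : Prop :=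
  (Bornology.IsBounded Ω → minimizesOn n s p W u Ω) ∧
  (¬ Bornology.IsBounded Ω → ∀ Ω' : Set (EuclideanSpace ℝ (Fin n)),
    IsOpen Ω' → Bornology.IsBounded Ω' → closure Ω' ⊆ Ω → minimizesOn n s p W u Ω')

/-- The `s`-fractional `p`-Laplacian. -/
def fracPLap (n : ℕ) (s p : ℝ) (z : EuclideanSpace ℝ (Fin n) → ℝ)
    (x : EuclideanSpace ℝ (Fin n)) : ℝ :=
  ∫ y, (z x - z y) * |z x - z y| ^ (p - 2) / ‖x - y‖ ^ ((n : ℝ) + s * p)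

/-- The rescaled energy `F_{s,ε}^p(u,Ω)`. -/
def Fenergy (n : ℕ) (s p : ℝ) (W : ℝ → ℝ) (ε : ℝ) (u : EuclideanSpace ℝ (Fin n) → ℝ)
    (Ω : Set (EuclideanSpace ℝ (Fin n))) : ℝ≥0∞ :=
  Kenergy n s p u Ω + ENNReal.ofReal (ε ^ (-(s * p))) * ∫⁻ x in Ω, ENNReal.ofReal (W (u x))

/-- The integer `k = k(s,p)` of the barrier construction. -/
def kbar (p s : ℝ) : ℕ :=
  if p < 2 then (if s < (p - 1) / (2 * p) then 0 else ⌊s * p / (p - 1)⌋₊ + 1) else 1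

/-- `g(t) = t^{-qs}`. -/
def gbar (q s : ℝ) : ℝ → ℝ := fun t => t ^ (-(q * s))

/-- The function `f` of the barrier construction. -/
def fbar (q s r : ℝ) (k : ℕ) : ℝ → ℝ := fun t =>
  gbar q s (r - t) + ∑ i ∈ Finset.range (k + 1),
    ((-1 : ℝ) ^ (i + 1) / (i.factorial : ℝ)) * iteratedDeriv i (gbar q s) (r / 2) * (t - r / 2) ^ i

/-- The barrier profile `h`. -/
def hbar (q s r : ℝ) (k : ℕ) : ℝ → ℝ := fun t =>
  if t ≤ r / 2 then 0 else if t < r then min (fbar q s r k t) 1 else 1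

/-- The radial barrier `v(x) = h(|x|)`. -/
def vbar (n : ℕ) (q s r : ℝ) (k : ℕ) : EuclideanSpace ℝ (Fin n) → ℝ := fun x => hbar q s r k ‖x‖

/-- `c_{q,s,i} = (∏_{j=0}^{i-1} (qs+j)) / i!`. -/
def cQSI (q s : ℝ) (i : ℕ) : ℝ := (∏ j ∈ Finset.range i, (q * s + (j : ℝ))) / (i.factorial : ℝ)

/-- `c̄_{k,q,s} = max { 2^{qs}, 2^{qs} ∑_{i=0}^k c_{q,s,i} }`. -/
def cbar (q s : ℝ) (k : ℕ) : ℝ :=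
  max ((2 : ℝ) ^ (q * s)) ((2 : ℝ) ^ (q * s) * ∑ i ∈ Finset.range (k + 1), cQSI q s i)

end

lemma aux_one_le_prod {s : Finset ℕ} {f : ℕ → ℝ} (h : ∀ i ∈ s, 1 ≤ f i) :
    1 ≤ ∏ i ∈ s, f i := by
  calc (1:ℝ) = ∏ _i ∈ s, 1 := by simp
  _ ≤ ∏ i ∈ s, f i := Finset.prod_le_prod (fun _ _ => by norm_num) h

/-- **Uniform bound in `s`** (Lemma 3.3 of the paper):
`(c̄_{k,q,s})^{1/(qs)} ≤ ĉ_{p,m} = 2 e^{c^{(1)}_{p,m}}` for every `s ∈ (0,1)`. -/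
theorem cbar_uniform_bound
    {p m : ℝ} (hp : 1 < p) (hm : p ≤ m) :
    ∀ s ∈ Set.Ioo (0 : ℝ) 1,
      cbar (p / (m - 1)) s (kbar p s) ^ (1 / ((p / (m - 1)) * s)) ≤
        2 * Real.exp (((⌊p / (p - 1)⌋₊ : ℝ) + 2) *
          ∏ j ∈ Finset.Icc 1 (⌊p / (p - 1)⌋₊ + 1), (p / (m - 1) + (j : ℝ))) := by
  intro s hs
  obtain ⟨hs0, hs1⟩ := hs
  have hm1 : (0:ℝ) < m - 1 := by linarith
  set q : ℝ := p / (m - 1) with hqdef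
  have hq : 0 < q := div_pos (by linarith) hm1
  have hqs : 0 < q * s := mul_pos hq hs0
  set K := ⌊p / (p - 1)⌋₊ with hKdef
  set P : ℝ := ∏ j ∈ Finset.Icc 1 (K + 1), (q + (j : ℝ)) with hPdef
  have hP1 : (1:ℝ) ≤ P := by
    rw [hPdef]
    apply aux_one_le_prod
    intro j hj
    have h1 : 1 ≤ j := (Finset.mem_Icc.mp hj).1
    have : (1:ℝ) ≤ (j:ℝ) := by exact_mod_cast h1
    linarith
  set C : ℝ := ((K : ℝ) + 2) * P with hCdef
  have hC0 : 0 ≤ C := mul_nonneg (by positivity) (by linarith)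
  -- reindexing of P
  have hPP : ∏ j ∈ Finset.range (K + 1), (q + (j : ℝ) + 1) = P := by
    rw [hPdef, ← Finset.Ico_add_one_right_eq_Icc, Finset.prod_Ico_eq_prod_range]
    apply Finset.prod_congr (by norm_num)
    intro j _
    push_cast
    ring
  -- k ≤ K + 1
  have hk : kbar p s ≤ K + 1 := by
    unfold kbar
    split_ifs with h1 h2
    · exact Nat.zero_le _
    · have hle : s * p / (p - 1) ≤ p / (p - 1) := by
        apply div_le_div_of_nonneg_right ?_ (by linarith)
        nlinarith
      exact Nat.succ_le_succ (Nat.floor_le_floor hle)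
    · omega
  -- bound on each term cQSI q s (i+1)
  have hterm : ∀ i, i + 1 ≤ K + 1 → cQSI q s (i + 1) ≤ q * s * P := by
    intro i hi
    have hfac : (1:ℝ) ≤ ((i+1).factorial : ℝ) := by
      exact_mod_cast Nat.one_le_iff_ne_zero.mpr (Nat.factorial_ne_zero _)
    have hprod0 : (0:ℝ) ≤ ∏ j ∈ Finset.range (i + 1), (q * s + (j : ℝ)) := by
      apply Finset.prod_nonneg
      intro j _
      positivity
    have h1 : cQSI q s (i + 1) ≤ ∏ j ∈ Finset.range (i + 1), (q * s + (j : ℝ)) := by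
      rw [cQSI]
      exact div_le_self hprod0 hfac
    have h2 : ∏ j ∈ Finset.range (i + 1), (q * s + (j : ℝ))
        = (∏ j ∈ Finset.range i, (q * s + ((j:ℝ) + 1))) * (q * s) := by
      rw [Finset.prod_range_succ']
      congr 1
      · exact Finset.prod_congr rfl fun j _ => by push_cast; ring
      · norm_num
    have h3 : ∏ j ∈ Finset.range i, (q * s + ((j:ℝ) + 1))
        ≤ ∏ j ∈ Finset.range i, (q + (j:ℝ) + 1) := by
      apply Finset.prod_le_prod
      · intro j _; positivity
      · intro j _
        have : q * s ≤ q := by nlinarith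
        linarith
    have h4 : ∏ j ∈ Finset.range i, (q + (j:ℝ) + 1)
        ≤ ∏ j ∈ Finset.range (K + 1), (q + (j:ℝ) + 1) := by
      rw [← Finset.prod_range_mul_prod_Ico (fun j => (q + (j:ℝ) + 1)) (by omega : i ≤ K + 1)]
      apply le_mul_of_one_le_right
      · exact Finset.prod_nonneg fun j _ => by positivity
      · exact aux_one_le_prod fun j _ => by
          have : (0:ℝ) ≤ (j:ℝ) := Nat.cast_nonneg j
          linarith
    calc cQSI q s (i + 1) ≤ _ := h1
      _ = _ := h2
      _ ≤ (∏ j ∈ Finset.range (K + 1), (q + (j:ℝ) + 1)) * (q * s) := by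
          apply mul_le_mul_of_nonneg_right (le_trans h3 h4) (le_of_lt hqs)
      _ = q * s * P := by rw [hPP]; ring
  -- bound on the sum
  have hsum : ∑ i ∈ Finset.range (kbar p s + 1), cQSI q s i ≤ 1 + q * s * C := by
    rw [Finset.sum_range_succ']
    have h0 : cQSI q s 0 = 1 := by simp [cQSI]
    rw [h0]
    have hbd : ∑ i ∈ Finset.range (kbar p s), cQSI q s (i + 1)
        ≤ ∑ _i ∈ Finset.range (kbar p s), q * s * P := by
      apply Finset.sum_le_sum
      intro i hi
      apply hterm
      have := Finset.mem_range.mp hi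
      omega
    have hbd2 : ∑ _i ∈ Finset.range (kbar p s), q * s * P = (kbar p s : ℝ) * (q * s * P) := by
      rw [Finset.sum_const, nsmul_eq_mul, Finset.card_range]
    have hkK : ((kbar p s : ℕ) : ℝ) ≤ (K : ℝ) + 1 := by exact_mod_cast hk
    have hPpos : (0:ℝ) < P := by linarith
    have : (kbar p s : ℝ) * (q * s * P) ≤ q * s * C := by
      rw [hCdef]
      nlinarith [mul_pos hqs hPpos]
    linarith
  -- put it together
  have hexp : 1 + q * s * C ≤ Real.exp (q * s * C) := by
    have := Real.add_one_le_exp (q * s * C)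
    linarith
  have hcb : cbar q s (kbar p s) ≤ (2 * Real.exp C) ^ (q * s) := by
    have h2qs : (0:ℝ) < (2:ℝ) ^ (q * s) := Real.rpow_pos_of_pos (by norm_num) _
    have hrhs : (2 * Real.exp C) ^ (q * s) = (2:ℝ) ^ (q * s) * Real.exp (q * s * C) := by
      rw [Real.mul_rpow (by norm_num) (Real.exp_pos C).le, ← Real.exp_mul, mul_comm C (q*s)]
    rw [hrhs, cbar, max_le_iff]
    constructor
    · nlinarith [Real.exp_pos (q * s * C), Real.add_one_le_exp (q * s * C),
        mul_nonneg hqs.le hC0]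
    · have hS : ∑ i ∈ Finset.range (kbar p s + 1), cQSI q s i ≤ Real.exp (q * s * C) :=
        le_trans hsum hexp
      nlinarith
  have hcb0 : 0 ≤ cbar q s (kbar p s) :=
    le_trans (Real.rpow_pos_of_pos (by norm_num : (0:ℝ) < 2) (q*s)).le (le_max_left _ _)
  have hfin : cbar q s (kbar p s) ^ (1 / (q * s))
      ≤ ((2 * Real.exp C) ^ (q * s)) ^ (1 / (q * s)) :=
    Real.rpow_le_rpow hcb0 hcb (by positivity)
  have heq : ((2 * Real.exp C) ^ (q * s)) ^ (1 / (q * s)) = 2 * Real.exp C := by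
    rw [one_div]
    exact Real.rpow_rpow_inv (by positivity) (ne_of_gt hqs)
  rw [heq] at hfin
  exact hfin
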